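/- For w ∈ ℂ with Re w > 0, set ξ(w) := (1+w²)^{1/2} + log w − log(1 + (1+w²)^{1/2}), where (·)^{1/2} and log denote the principal branches (this is well defined since 1+w² ∉ (−∞,0] for Re w > 0). Then for every z ∈ ℂ with Re z > 0 and every ε ∈ (0,1), one has Re ξ(εz) < Re ξ(z). -/

import Mathlib

open Complex

noncomputable def xiOlver (w : ℂ) : ℂ :=
  (1 + w ^ 2) ^ ((1 : ℂ) / 2) + Complex.log w - Complex.log (1 + (1 + w ^ 2) ^ ((1 : ℂ) / 2))

lemma slit_aux {w : ℂ} (hw : 0 < w.re) : (1 + w ^ 2) ∈ Complex.slitPlane := by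
  rw [Complex.mem_slitPlane_iff]
  by_cases h : w.im = 0
  · left; simp [Complex.add_re, pow_two, Complex.mul_re, h]
    nlinarith
  · right; simp only [Complex.add_im, Complex.one_im, pow_two, Complex.mul_im, zero_add]
    intro hh
    apply h
    have h2 : w.im * w.re = 0 := by linarith
    rcases mul_eq_zero.mp h2 with h3 | h3
    · exact h3
    · exact absurd h3 hw.ne' 

lemma sqrt_sq {u : ℂ} (hu : u ≠ 0) : (u ^ ((1:ℂ)/2)) ^ 2 = u := by
  rw [pow_two, ← Complex.cpow_add _ _ hu]
  norm_num

lemma sqrt_re_pos {u : ℂ} (hu : u ∈ Complex.slitPlane) : 0 < (u ^ ((1:ℂ)/2)).re := by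
  have hu0 : u ≠ 0 := Complex.slitPlane_ne_zero hu
  rw [Complex.cpow_def_of_ne_zero hu0, Complex.exp_re]
  apply mul_pos (Real.exp_pos _)
  apply Real.cos_pos_of_mem_Ioo
  have h1 : (Complex.log u * (1/2)).im = u.arg / 2 := by
    simp [Complex.mul_im, Complex.log_im, Complex.log_re]; ring
  rw [h1]
  constructor
  · have := Complex.neg_pi_lt_arg u; linarith [Real.pi_pos]
  · have h2 := Complex.arg_le_pi u
    have h3 := Complex.slitPlane_arg_ne_pi hu
    have : u.arg < Real.pi := lt_of_le_of_ne h2 h3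
    linarith [Real.pi_pos]

lemma hasDerivAt_xiOlver {w : ℂ} (hw : 0 < w.re) :
    HasDerivAt xiOlver ((1 + w ^ 2) ^ ((1:ℂ)/2) / w) w := by
  set u : ℂ := 1 + w ^ 2 with hu_def
  set s : ℂ := u ^ ((1:ℂ)/2) with hs_def
  have hw0 : w ≠ 0 := fun h => by simp [h] at hw
  have hu : u ∈ Complex.slitPlane := slit_aux hw
  have hu0 : u ≠ 0 := Complex.slitPlane_ne_zero hu
  have hs2 : s ^ 2 = u := sqrt_sq hu0
  have hs0 : s ≠ 0 := fun h => hu0 (by rw [← hs2, h]; ring)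
  have hsre : 0 < s.re := sqrt_re_pos hu
  have h1s : (1 : ℂ) + s ∈ Complex.slitPlane := by
    rw [Complex.mem_slitPlane_iff]; left; simp; linarith
  have h1s0 : (1 : ℂ) + s ≠ 0 := Complex.slitPlane_ne_zero h1s
  have hinv : u ^ ((1:ℂ)/2 - 1) = s⁻¹ := by
    apply eq_inv_of_mul_eq_one_left
    rw [hs_def, ← Complex.cpow_add _ _ hu0]
    norm_num
  have hinner : HasDerivAt (fun x : ℂ => 1 + x ^ 2) (2 * w) w := by
    simpa using (hasDerivAt_pow 2 w).const_add 1
  have hds : HasDerivAt (fun x : ℂ => (1 + x ^ 2) ^ ((1:ℂ)/2))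
      ((1:ℂ)/2 * u ^ ((1:ℂ)/2 - 1) * (2 * w)) w := hinner.cpow_const hu
  have hlogw : HasDerivAt Complex.log w⁻¹ w := Complex.hasDerivAt_log (Or.inl hw)
  have hlog1s : HasDerivAt (fun x : ℂ => Complex.log (1 + (1 + x ^ 2) ^ ((1:ℂ)/2)))
      ((1 + s)⁻¹ * ((1:ℂ)/2 * u ^ ((1:ℂ)/2 - 1) * (2 * w))) w := by
    exact (Complex.hasDerivAt_log h1s).comp w (hds.const_add 1)
  have htot := (hds.add hlogw).sub hlog1s
  have heq : (1:ℂ)/2 * u ^ ((1:ℂ)/2 - 1) * (2 * w) + w⁻¹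
      - (1 + s)⁻¹ * ((1:ℂ)/2 * u ^ ((1:ℂ)/2 - 1) * (2 * w)) = s / w := by
    rw [hinv]
    have e1 : (1:ℂ)/2 * s⁻¹ * (2*w) = w / s := by field_simp
    rw [e1]
    field_simp
    linear_combination (-s) * hs2 - s * hu_def
  rw [heq] at htot
  exact htot

/-- For `z` in the right half-plane and `ε ∈ (0,1)` one has `Re ξ(εz) < Re ξ(z)`. -/
theorem xiOlver_re_lt (z : ℂ) (hz : 0 < z.re) (ε : ℝ) (hε0 : 0 < ε) (hε1 : ε < 1) :
    (xiOlver ((ε : ℂ) * z)).re < (xiOlver z).re := by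
  have hz0 : z ≠ 0 := fun h => by simp [h] at hz
  set f : ℝ → ℝ := fun t => (xiOlver ((t : ℂ) * z)).re with hf
  have key : ∀ t : ℝ, 0 < t →
      HasDerivAt f (((1 + ((t:ℂ) * z) ^ 2) ^ ((1:ℂ)/2)).re / t) t := by
    intro t ht
    have hre : 0 < ((t:ℂ) * z).re := by
      simp [Complex.mul_re]
      nlinarith
    have ht0 : (t : ℂ) ≠ 0 := by exact_mod_cast ht.ne'
    have h1 : HasDerivAt (fun w : ℂ => xiOlver (w * z))
        ((1 + ((t:ℂ) * z) ^ 2) ^ ((1:ℂ)/2) / ((t:ℂ) * z) * z) (t : ℂ) := by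
      have := (hasDerivAt_xiOlver hre).comp (t:ℂ) ((hasDerivAt_id ((t:ℂ))).mul_const z)
      simpa [Function.comp_def] using this
    have h2 := h1.comp_ofReal
    have h3 := Complex.reCLM.hasFDerivAt.comp_hasDerivAt t h2
    have h4 : ((1 + ((t:ℂ) * z) ^ 2) ^ ((1:ℂ)/2) / ((t:ℂ) * z) * z)
        = (1 + ((t:ℂ) * z) ^ 2) ^ ((1:ℂ)/2) / (t:ℂ) := by
      field_simp
    rw [h4] at h3
    have h5 : (((1 + ((t:ℂ) * z) ^ 2) ^ ((1:ℂ)/2) / (t:ℂ)).re)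
        = ((1 + ((t:ℂ) * z) ^ 2) ^ ((1:ℂ)/2)).re / t := Complex.div_ofReal_re _ _
    simpa [h5, Function.comp_def] using h3
  have hmono : StrictMonoOn f (Set.Icc ε 1) := by
    apply strictMonoOn_of_deriv_pos (convex_Icc ε 1)
    · intro x hx
      exact (key x (lt_of_lt_of_le hε0 hx.1)).continuousAt.continuousWithinAt
    · intro x hx
      rw [interior_Icc] at hx
      have hx0 : 0 < x := lt_trans hε0 hx.1
      rw [(key x hx0).deriv]
      apply div_pos _ hx0
      have hre : 0 < ((x:ℂ) * z).re := by
        simp [Complex.mul_re]; nlinarith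
      exact sqrt_re_pos (slit_aux hre)
  have := hmono (Set.mem_Icc.mpr ⟨le_refl ε, hε1.le⟩) (Set.mem_Icc.mpr ⟨hε1.le, le_refl 1⟩) hε1
  simpa [hf] using this
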